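/- For any matroid M of positive rank, Σ_{F ∈ L} t^{rk F} χ_{M_F}(t^{-1}) χ_{M^F}(t) = 0, where the sum is over all flats F of M. -/

import Mathlib

open Polynomial Set Matroid
open scoped Classical Matroid

/-- The rank of a set `X` in a matroid `M`: the largest cardinality of an
independent subset of `X`. -/
noncomputable def Matroid.rankOf {α : Type} (M : Matroid α) (X : Set α) : ℕ :=
  sSup {n | ∃ I ⊆ X, M.Indep I ∧ I.ncard = n}

/-- The rank of a matroid. -/
noncomputable def Matroid.rank {α : Type} (M : Matroid α) : ℕ := M.rankOf M.E

/-- The characteristic polynomial of a matroid, via the Whitney rank formula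
(equivalently, `χ_M(t) = ∑_{F ∈ L} μ(⊥, F) t^{rk M − rk F}`). -/
noncomputable def Matroid.charPoly {α : Type} [Fintype α] (M : Matroid α) : Polynomial ℤ :=
  ∑ A ∈ M.E.toFinset.powerset,
    (-1 : Polynomial ℤ) ^ A.card * (X : Polynomial ℤ) ^ (M.rank - M.rankOf ↑A)

/-- Contraction of a set in a matroid (the dual of a restriction of the dual).
For a flat `F`, `M.con F` is the restriction `M^F` of the paper, whose lattice of
flats is `{G ∈ L : G ≥ F}`. -/
noncomputable def Matroid.con {α : Type} (M : Matroid α) (C : Set α) : Matroid α :=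
  (M✶ ↾ (M.E \ C))✶

set_option linter.unusedSectionVars false
set_option maxHeartbeats 1600000

section Aux

variable {α : Type} [Fintype α] {M : Matroid α} {I X Y F G K H : Set α}

namespace Matroid


lemma rankOf_eq_of_basis' (hI : M.IsBasis' I X) : M.rankOf X = I.ncard := by
  have hub : ∀ J, J ⊆ X → M.Indep J → J.ncard ≤ I.ncard := by
    intro J hJX hJ
    obtain ⟨J', hJ', hJJ'⟩ := hJ.subset_isBasis'_of_subset hJX
    have : (M ↾ X).IsBase I := isBase_restrict_iff'.2 hI
    have h2 : (M ↾ X).IsBase J' := isBase_restrict_iff'.2 hJ'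
    exact (Set.ncard_le_ncard hJJ' (J'.toFinite)).trans
      (h2.ncard_eq_ncard_of_isBase this).le
  apply IsGreatest.csSup_eq
  constructor
  · exact ⟨I, hI.subset, hI.indep, rfl⟩
  · rintro n ⟨J, hJX, hJ, rfl⟩
    exact hub J hJX hJ

lemma ncard_le_rankOf (hI : M.Indep I) (hIX : I ⊆ X) : I.ncard ≤ M.rankOf X := by
  obtain ⟨J, hJ⟩ := M.exists_isBasis' X
  rw [rankOf_eq_of_basis' hJ]
  obtain ⟨J', hJ', hJJ'⟩ := hI.subset_isBasis'_of_subset hIX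
  have : (M ↾ X).IsBase J := isBase_restrict_iff'.2 hJ
  have h2 : (M ↾ X).IsBase J' := isBase_restrict_iff'.2 hJ'
  exact (Set.ncard_le_ncard hJJ' (J'.toFinite)).trans (h2.ncard_eq_ncard_of_isBase this).le

lemma rankOf_mono (hXY : X ⊆ Y) : M.rankOf X ≤ M.rankOf Y := by
  obtain ⟨I, hI⟩ := M.exists_isBasis' X
  rw [rankOf_eq_of_basis' hI]
  exact ncard_le_rankOf hI.indep (hI.subset.trans hXY)

lemma rankOf_eq_of_basis (hI : M.IsBasis I X) : M.rankOf X = I.ncard :=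
  rankOf_eq_of_basis' hI.isBasis'

lemma rankOf_closure (M : Matroid α) (X : Set α) : M.rankOf (M.closure X) = M.rankOf X := by
  obtain ⟨I, hI⟩ := M.exists_isBasis' X
  rw [rankOf_eq_of_basis' hI, rankOf_eq_of_basis hI.isBasis_closure_right]

lemma rankOf_le_rank (M : Matroid α) (X : Set α) : M.rankOf X ≤ M.rank := by
  obtain ⟨I, hI⟩ := M.exists_isBasis' X
  rw [rankOf_eq_of_basis' hI]
  exact ncard_le_rankOf hI.indep hI.indep.subset_ground

lemma rankOf_restrict (M : Matroid α) (R X : Set α) (hXR : X ⊆ R) :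
    (M ↾ R).rankOf X = M.rankOf X := by
  unfold rankOf
  congr 1
  ext n
  constructor
  · rintro ⟨I, hIX, hI, rfl⟩; exact ⟨I, hIX, (restrict_indep_iff.1 hI).1, rfl⟩
  · rintro ⟨I, hIX, hI, rfl⟩
    exact ⟨I, hIX, restrict_indep_iff.2 ⟨hI, hIX.trans hXR⟩, rfl⟩

lemma rank_restrict (M : Matroid α) (R : Set α) : (M ↾ R).rank = M.rankOf R := by
  rw [Matroid.rank, restrict_ground_eq, rankOf_restrict _ _ _ Subset.rfl]

lemma rank_eq_ncard_base {B : Set α} (hB : M.IsBase B) : M.rank = B.ncard :=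
  rankOf_eq_of_basis hB.isBasis_ground


lemma dual_rankOf_add_rank (M : Matroid α) (X : Set α) (hX : X ⊆ M.E) :
    M✶.rankOf X + M.rank = X.ncard + M.rankOf (M.E \ X) := by
  -- choose a basis I of E \ X and extend to a base B
  obtain ⟨I, hI⟩ := M.exists_isBasis (M.E \ X) diff_subset
  obtain ⟨B, hB, hIB⟩ := hI.indep.subset_isBasis_of_subset (hI.indep.subset_ground)
  rw [isBasis_ground_iff] at hB
  have hBE : B ⊆ M.E := hB.indep.subset_ground
  have hBd : B ∩ (M.E \ X) = I := by
    refine (hI.eq_of_subset_indep (hB.indep.inter_right _)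
      (subset_inter hIB hI.subset) inter_subset_right).symm
  -- X \ B is a basis of X in the dual
  have hJind : M✶.Indep (X \ B) := by
    rw [dual_indep_iff_exists (diff_subset.trans hX)]
    exact ⟨B, hB, disjoint_sdiff_left⟩
  have hJbasis : M✶.IsBasis (X \ B) X := by
    refine hJind.isBasis_of_maximal_subset diff_subset ?_ hX
    intro K hK hJK hKX
    refine (Set.eq_of_subset_of_ncard_le hJK ?_ (K.toFinite)).symm.subset
    -- counting argument
    obtain ⟨B'', hB'', hdisj⟩ := (dual_indep_iff_exists (hKX.trans hX)).1 hK
    have h1 : (B'' ∩ (M.E \ X)).ncard ≤ I.ncard := by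
      rw [← rankOf_eq_of_basis hI]
      exact ncard_le_rankOf (hB''.indep.inter_right _) inter_subset_right
    have h2 : B''.ncard = (B'' ∩ (M.E \ X)).ncard + (B'' ∩ X).ncard := by
      rw [← Set.ncard_union_eq ?_ (Set.toFinite _) (Set.toFinite _)]
      · congr 1
        rw [← Set.inter_union_distrib_left, Set.diff_union_self,
          Set.union_eq_self_of_subset_right hX,
          Set.inter_eq_self_of_subset_left hB''.indep.subset_ground]
      · exact Set.disjoint_left.2 fun a ha hb => (ha.2).2 hb.2
    have h3 : (B'' ∩ X).ncard ≤ (X \ K).ncard := by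
      refine Set.ncard_le_ncard ?_ (Set.toFinite _)
      intro a ha
      exact ⟨ha.2, fun haK => (Set.disjoint_left.1 hdisj) haK ha.1⟩
    have h4 : B''.ncard = B.ncard := hB''.ncard_eq_ncard_of_isBase hB
    have h5 : B.ncard = I.ncard + (B ∩ X).ncard := by
      rw [← Set.ncard_union_eq ?_ (Set.toFinite _) (Set.toFinite _)]
      · congr 1
        rw [← hBd, ← Set.inter_union_distrib_left, Set.diff_union_self,
          Set.union_eq_self_of_subset_right hX, Set.inter_eq_self_of_subset_left hBE]
      · rw [← hBd]
        exact Set.disjoint_left.2 fun a ha hb => (ha.2).2 hb.2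
    have h6 : (X \ K).ncard + K.ncard = X.ncard :=
      Set.ncard_diff_add_ncard_of_subset hKX (X.toFinite)
    have h7 : (X \ B).ncard + (B ∩ X).ncard = X.ncard := by
      rw [← Set.ncard_union_eq ?_ (Set.toFinite _) (Set.toFinite _), Set.inter_comm, Set.diff_union_inter]
      exact Set.disjoint_left.2 fun a ha hb => ha.2 hb.1
    have h8 : (X \ B).ncard ≤ K.ncard := Set.ncard_le_ncard hJK (K.toFinite)
    omega
  have hr : M✶.rankOf X = (X \ B).ncard := rankOf_eq_of_basis hJbasis
  have h5 : B.ncard = I.ncard + (B ∩ X).ncard := by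
    rw [← Set.ncard_union_eq ?_ (Set.toFinite _) (Set.toFinite _)]
    · congr 1
      rw [← hBd, ← Set.inter_union_distrib_left, Set.diff_union_self,
        Set.union_eq_self_of_subset_right hX, Set.inter_eq_self_of_subset_left hBE]
    · rw [← hBd]
      exact Set.disjoint_left.2 fun a ha hb => (ha.2).2 hb.2
  have h7 : (X \ B).ncard + (B ∩ X).ncard = X.ncard := by
    rw [← Set.ncard_union_eq ?_ (Set.toFinite _) (Set.toFinite _), Set.inter_comm, Set.diff_union_inter]
    exact Set.disjoint_left.2 fun a ha hb => ha.2 hb.1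
  have h9 : M.rank = B.ncard := rank_eq_ncard_base hB
  have h10 : M.rankOf (M.E \ X) = I.ncard := rankOf_eq_of_basis hI
  omega


@[simp] lemma con_ground (M : Matroid α) (C : Set α) : (M.con C).E = M.E \ C := rfl

lemma con_rankOf_add (M : Matroid α) (C B : Set α) (hC : C ⊆ M.E) (hB : B ⊆ M.E \ C) :
    (M.con C).rankOf B + M.rankOf C = M.rankOf (B ∪ C) := by
  set M' := M✶ ↾ (M.E \ C) with hM'
  have hg : M'.E = M.E \ C := rfl
  -- duality formula for M' at B
  have e1 : M'✶.rankOf B + M'.rank = B.ncard + M'.rankOf ((M.E \ C) \ B) :=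
    dual_rankOf_add_rank M' B hB
  have e2 : M'.rank = M✶.rankOf (M.E \ C) := by
    rw [hM', rank_restrict]
  have e3 : M'.rankOf ((M.E \ C) \ B) = M✶.rankOf ((M.E \ C) \ B) := by
    rw [hM', rankOf_restrict _ _ _ diff_subset]
  have hBC : B ∪ C ⊆ M.E := union_subset (hB.trans diff_subset) hC
  have hset : (M.E \ C) \ B = M.E \ (B ∪ C) := by rw [diff_diff, union_comm]
  have e4 : M.rankOf C + M✶.rank = C.ncard + M✶.rankOf (M.E \ C) := by
    have := dual_rankOf_add_rank M✶ C (by rw [dual_ground]; exact hC)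
    rwa [dual_dual, dual_ground] at this
  have e5 : M.rankOf (B ∪ C) + M✶.rank = (B ∪ C).ncard + M✶.rankOf ((M.E \ C) \ B) := by
    have := dual_rankOf_add_rank M✶ (B ∪ C) (by rw [dual_ground]; exact hBC)
    rwa [dual_dual, dual_ground, ← hset] at this
  have hcard : (B ∪ C).ncard = B.ncard + C.ncard :=
    Set.ncard_union_eq (Set.disjoint_left.2 fun a ha hc => (hB ha).2 hc)
      (Set.toFinite _) (Set.toFinite _)
  have hcon : (M.con C).rankOf B = M'✶.rankOf B := rfl
  omega

lemma con_rank_add (M : Matroid α) (C : Set α) (hC : C ⊆ M.E) :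
    (M.con C).rank + M.rankOf C = M.rank := by
  have h := con_rankOf_add M C (M.E \ C) hC Subset.rfl
  rw [Set.diff_union_of_subset hC] at h
  exact h


lemma reflect_sum {β : Type} (N : ℕ) (s : Finset β) (f : β → Polynomial ℤ) :
    (∑ b ∈ s, f b).reflect N = ∑ b ∈ s, (f b).reflect N := by
  classical
  induction s using Finset.cons_induction with
  | empty => simp [Polynomial.reflect_zero]
  | cons a s ha ih => rw [Finset.sum_cons, Finset.sum_cons, Polynomial.reflect_add, ih]

lemma reflect_charPoly_restrict (hF : F ⊆ M.E) :
    ((M ↾ F).charPoly).reflect (M.rankOf F)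
      = ∑ A ∈ F.toFinset.powerset,
          (-1 : Polynomial ℤ) ^ A.card * (Polynomial.X : Polynomial ℤ) ^ (M.rankOf ↑A) := by
  have hg : (M ↾ F).E.toFinset = F.toFinset := by
    ext a; rw [Set.mem_toFinset, Set.mem_toFinset]; rfl
  rw [Matroid.charPoly, hg, reflect_sum]
  refine Finset.sum_congr rfl fun A hA => ?_
  have hAF : (A : Set α) ⊆ F := fun x hx => Set.mem_toFinset.1 (Finset.mem_powerset.1 hA hx)
  have h1 : (M ↾ F).rank = M.rankOf F := rank_restrict M F
  have h2 : (M ↾ F).rankOf ↑A = M.rankOf ↑A := rankOf_restrict M F _ hAF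
  have h3 : M.rankOf ↑A ≤ M.rankOf F := rankOf_mono hAF
  have hc : (-1 : Polynomial ℤ) ^ A.card = C ((-1 : ℤ) ^ A.card) := by
    simp
  rw [h1, h2, hc, reflect_C_mul_X_pow,
    revAt_le (by omega : M.rankOf F - M.rankOf ↑A ≤ M.rankOf F),
    Nat.sub_sub_self h3]

lemma charPoly_con (hF : F ⊆ M.E) :
    (M.con F).charPoly
      = ∑ B ∈ (M.E \ F).toFinset.powerset,
          (-1 : Polynomial ℤ) ^ B.card * (Polynomial.X : Polynomial ℤ) ^ (M.rank - M.rankOf (↑B ∪ F)) := by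
  have hg : (M.con F).E.toFinset = (M.E \ F).toFinset := by
    ext a; rw [Set.mem_toFinset, Set.mem_toFinset]; rfl
  rw [Matroid.charPoly, hg]
  refine Finset.sum_congr rfl fun B hB => ?_
  have hBF : (B : Set α) ⊆ M.E \ F := fun x hx => Set.mem_toFinset.1 (Finset.mem_powerset.1 hB hx)
  have h1 := con_rankOf_add M F ↑B hF hBF
  have h2 := con_rank_add M F hF
  have h3 : M.rankOf (↑B ∪ F) ≤ M.rank := rankOf_le_rank M _
  have h4 : M.rankOf F ≤ M.rankOf (↑B ∪ F) := rankOf_mono subset_union_right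
  have he : (M.con F).rank - (M.con F).rankOf ↑B = M.rank - M.rankOf (↑B ∪ F) := by omega
  rw [he]


/-- The sign-sum over subsets `B` of `E \ H` whose closure together with `H` is `K`;
this is the Möbius function of the interval `[H,K]` of the lattice of flats. -/
noncomputable def dd (M : Matroid α) (H K : Set α) : Polynomial ℤ :=
  ∑ B ∈ (M.E \ H).toFinset.powerset.filter (fun B : Finset α => M.closure (H ∪ ↑B) = K),
    (-1 : Polynomial ℤ) ^ B.card

lemma closure_flat' (M : Matroid α) (X : Set α) : M.IsFlat (M.closure X) := by
  rw [Matroid.closure_def]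
  rw [sInter_eq_iInter]
  haveI : Nonempty {F // F ∈ {F | M.IsFlat F ∧ X ∩ M.E ⊆ F}} :=
    ⟨⟨M.E, M.ground_isFlat, inter_subset_right⟩⟩
  exact IsFlat.iInter (fun F => F.2.1)

lemma neg_one_sum (u : Finset (Finset α)) :
    (∑ B ∈ u, (-1 : Polynomial ℤ) ^ B.card) = C (∑ B ∈ u, (-1 : ℤ) ^ B.card) := by
  rw [map_sum]
  exact Finset.sum_congr rfl (by simp)

lemma claimA (hH : M.IsFlat H) (hK : M.IsFlat K) (hHK : H ⊆ K) :
    (∑ K' ∈ Finset.univ.filter (fun K' : {F : Set α // M.IsFlat F} => H ⊆ K'.1 ∧ K'.1 ⊆ K),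
      dd M H K'.1) = if H = K then 1 else 0 := by
  classical
  set t := Finset.univ.filter (fun K' : {F : Set α // M.IsFlat F} => H ⊆ K'.1 ∧ K'.1 ⊆ K) with ht
  set s := (M.E \ H).toFinset.powerset.filter (fun B : Finset α => (B : Set α) ⊆ K) with hs
  have hsub : ∀ B ∈ (M.E \ H).toFinset.powerset, (B : Set α) ⊆ M.E \ H := by
    intro B hB x hx
    exact Set.mem_toFinset.1 (Finset.mem_powerset.1 hB hx)
  have hground : ∀ B ∈ (M.E \ H).toFinset.powerset, H ∪ (B : Set α) ⊆ M.E := by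
    intro B hB
    exact union_subset hH.subset_ground ((hsub B hB).trans diff_subset)
  have maps : ∀ B ∈ s, (⟨M.closure (H ∪ ↑B), M.closure_flat' _⟩ : {F : Set α // M.IsFlat F}) ∈ t := by
    intro B hB
    obtain ⟨hB1, hB2⟩ := Finset.mem_filter.1 hB
    refine Finset.mem_filter.2 ⟨Finset.mem_univ _, ?_, ?_⟩
    · exact subset_union_left.trans (M.subset_closure _ (hground B hB1))
    · have : M.closure (H ∪ ↑B) ⊆ M.closure K :=
        M.closure_subset_closure (union_subset hHK hB2)
      rwa [hK.closure] at this
  have hfib := Finset.sum_fiberwise_of_maps_to maps (fun B : Finset α => (-1 : Polynomial ℤ) ^ B.card)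
  have hfibers : ∀ K' ∈ t,
      (s.filter (fun B : Finset α => (⟨M.closure (H ∪ ↑B), M.closure_flat' _⟩ :
        {F : Set α // M.IsFlat F}) = K'))
      = (M.E \ H).toFinset.powerset.filter (fun B : Finset α => M.closure (H ∪ ↑B) = K'.1) := by
    intro K' hK'
    obtain ⟨-, hK'1, hK'2⟩ := Finset.mem_filter.1 hK'
    ext B
    simp only [hs, Finset.mem_filter, Finset.mem_powerset, Subtype.ext_iff]
    constructor
    · rintro ⟨⟨h1, -⟩, h3⟩
      exact ⟨h1, h3⟩
    · rintro ⟨h1, h3⟩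
      refine ⟨⟨h1, ?_⟩, h3⟩
      have hBE : (B : Set α) ⊆ M.E \ H := fun x hx => Set.mem_toFinset.1 (h1 hx)
      have : (B : Set α) ⊆ M.closure (H ∪ ↑B) :=
        subset_union_right.trans (M.subset_closure _
          (union_subset hH.subset_ground (hBE.trans diff_subset)))
      rw [h3] at this
      exact this.trans hK'2
  have lhs_eq : (∑ K' ∈ t, dd M H K'.1)
      = ∑ K' ∈ t, ∑ B ∈ s.filter (fun B : Finset α => (⟨M.closure (H ∪ ↑B), M.closure_flat' _⟩ :
          {F : Set α // M.IsFlat F}) = K'), (-1 : Polynomial ℤ) ^ B.card := by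
    refine Finset.sum_congr rfl fun K' hK' => ?_
    rw [hfibers K' hK', dd]
  rw [lhs_eq, hfib]
  -- now the RHS : sum over s of (-1)^card
  have hseq : s = (K \ H).toFinset.powerset := by
    ext B
    simp only [hs, Finset.mem_filter, Finset.mem_powerset]
    constructor
    · rintro ⟨h1, h2⟩ x hx
      rw [Set.mem_toFinset]
      exact ⟨h2 hx, (Set.mem_toFinset.1 (h1 hx)).2⟩
    · intro h1
      constructor
      · intro x hx
        have := Set.mem_toFinset.1 (h1 hx)
        rw [Set.mem_toFinset]
        exact ⟨hK.subset_ground this.1, this.2⟩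
      · intro x hx
        exact (Set.mem_toFinset.1 (h1 hx)).1
  rw [hseq, neg_one_sum, Finset.sum_powerset_neg_one_pow_card]
  have hiff : ((K \ H).toFinset = ∅) ↔ H = K := by
    rw [Set.toFinset_eq_empty, diff_eq_empty]
    exact ⟨fun h => (hHK.antisymm h), fun h => h ▸ Subset.rfl⟩
  by_cases hHK' : H = K
  · rw [if_pos (hiff.2 hHK'), map_one, if_pos hHK']
  · rw [if_neg (fun hc => hHK' (hiff.1 hc)), map_zero, if_neg hHK']

lemma dd_self (hG : M.IsFlat G) : dd M G G = 1 := by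
  rw [dd]
  have : (M.E \ G).toFinset.powerset.filter (fun B : Finset α => M.closure (G ∪ ↑B) = G) = {∅} := by
    ext B
    simp only [Finset.mem_filter, Finset.mem_powerset, Finset.mem_singleton]
    constructor
    · rintro ⟨h1, h2⟩
      by_contra hne
      obtain ⟨x, hx⟩ := Finset.nonempty_iff_ne_empty.2 hne
      have hxEG : x ∈ M.E \ G := Set.mem_toFinset.1 (h1 hx)
      have hxG : x ∈ G := by
        have : (B : Set α) ⊆ M.closure (G ∪ ↑B) :=
          subset_union_right.trans (M.subset_closure _
            (union_subset hG.subset_ground (fun y hy => (Set.mem_toFinset.1 (h1 hy)).1)))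
        rw [h2] at this
        exact this hx
      exact hxEG.2 hxG
    · rintro rfl
      refine ⟨Finset.empty_subset _, ?_⟩
      simp [hG.closure]
  rw [this]
  simp

lemma claimB (hG : M.IsFlat G) : ∀ n : ℕ, ∀ K : Set α, M.IsFlat K → G ⊆ K → (K \ G).ncard = n →
    (∑ H ∈ Finset.univ.filter (fun H : {F : Set α // M.IsFlat F} => G ⊆ H.1 ∧ H.1 ⊆ K),
      dd M H.1 K) = if G = K then 1 else 0 := by
  intro n
  induction n using Nat.strong_induction_on with
  | _ n IH =>
  intro K hK hGK hcard
  by_cases hGKeq : G = K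
  · subst hGKeq
    have hsingle : Finset.univ.filter
        (fun H : {F : Set α // M.IsFlat F} => G ⊆ H.1 ∧ H.1 ⊆ G) = {⟨G, hG⟩} := by
      ext H
      simp only [Finset.mem_filter, Finset.mem_univ, true_and, Finset.mem_singleton]
      constructor
      · rintro ⟨h1, h2⟩; exact Subtype.ext (h2.antisymm h1)
      · rintro rfl; exact ⟨Subset.rfl, Subset.rfl⟩
    rw [hsingle, if_pos rfl, Finset.sum_singleton, dd_self hG]
  · rw [if_neg hGKeq]
    -- double-counting identity
    have key : (∑ K' ∈ Finset.univ.filter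
          (fun K' : {F : Set α // M.IsFlat F} => G ⊆ K'.1 ∧ K'.1 ⊆ K),
        ∑ H ∈ Finset.univ.filter
          (fun H : {F : Set α // M.IsFlat F} => G ⊆ H.1 ∧ H.1 ⊆ K'.1),
        dd M H.1 K'.1) = 1 := by
      rw [Finset.sum_comm' (t' := Finset.univ.filter
            (fun H : {F : Set α // M.IsFlat F} => G ⊆ H.1 ∧ H.1 ⊆ K))
          (s' := fun H => Finset.univ.filter
            (fun K' : {F : Set α // M.IsFlat F} => H.1 ⊆ K'.1 ∧ K'.1 ⊆ K))]
      · have : ∀ H ∈ Finset.univ.filter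
            (fun H : {F : Set α // M.IsFlat F} => G ⊆ H.1 ∧ H.1 ⊆ K),
            (∑ K' ∈ Finset.univ.filter
              (fun K' : {F : Set α // M.IsFlat F} => H.1 ⊆ K'.1 ∧ K'.1 ⊆ K),
              dd M H.1 K'.1) = if H.1 = K then 1 else 0 := by
          intro H hH
          obtain ⟨-, h1, h2⟩ := Finset.mem_filter.1 hH
          exact claimA H.2 hK h2
        rw [Finset.sum_congr rfl this]
        rw [Finset.sum_eq_single_of_mem (⟨K, hK⟩ : {F : Set α // M.IsFlat F})
          (by simp [hGK]) (fun b _ hbne => if_neg (fun hc => hbne (Subtype.ext hc)))]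
        exact if_pos rfl
      · intro K' H
        simp only [Finset.mem_filter, Finset.mem_univ, true_and]
        constructor
        · rintro ⟨⟨h1, h2⟩, h3, h4⟩
          exact ⟨⟨h4, h2⟩, h3, h4.trans h2⟩
        · rintro ⟨⟨h1, h2⟩, h3, h4⟩
          exact ⟨⟨h3.trans h1, h2⟩, h3, h1⟩
    have hKmem : (⟨K, hK⟩ : {F : Set α // M.IsFlat F}) ∈ Finset.univ.filter
        (fun K' : {F : Set α // M.IsFlat F} => G ⊆ K'.1 ∧ K'.1 ⊆ K) := by
      simp [hGK]
    rw [← Finset.add_sum_erase _ _ hKmem] at key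
    have herase : (∑ K' ∈ (Finset.univ.filter
          (fun K' : {F : Set α // M.IsFlat F} => G ⊆ K'.1 ∧ K'.1 ⊆ K)).erase ⟨K, hK⟩,
        ∑ H ∈ Finset.univ.filter
          (fun H : {F : Set α // M.IsFlat F} => G ⊆ H.1 ∧ H.1 ⊆ K'.1),
        dd M H.1 K'.1) = 1 := by
      have hcongr : ∀ K' ∈ (Finset.univ.filter
          (fun K' : {F : Set α // M.IsFlat F} => G ⊆ K'.1 ∧ K'.1 ⊆ K)).erase ⟨K, hK⟩,
          (∑ H ∈ Finset.univ.filter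
            (fun H : {F : Set α // M.IsFlat F} => G ⊆ H.1 ∧ H.1 ⊆ K'.1),
            dd M H.1 K'.1) = if G = K'.1 then 1 else 0 := by
        intro K' hK'
        obtain ⟨hne, hmem⟩ := Finset.mem_erase.1 hK'
        obtain ⟨-, h1, h2⟩ := Finset.mem_filter.1 hmem
        have hssub : K'.1 ⊂ K := h2.ssubset_of_ne (fun h => hne (Subtype.ext h))
        have hsub2 : K'.1 \ G ⊂ K \ G := by
          refine (diff_subset_diff_left hssub.subset).ssubset_of_ne (fun h => hssub.ne ?_)
          refine hssub.subset.antisymm ?_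
          intro x hx
          by_cases hxG : x ∈ G
          · exact h1 hxG
          · have hxKG : x ∈ K \ G := ⟨hx, hxG⟩
            rw [← h] at hxKG
            exact hxKG.1
        have hlt : (K'.1 \ G).ncard < n := by
          rw [← hcard]
          exact Set.ncard_lt_ncard hsub2 (Set.toFinite _)
        exact IH _ hlt K'.1 K'.2 h1 rfl
      rw [Finset.sum_congr rfl hcongr]
      rw [Finset.sum_eq_single_of_mem (⟨G, hG⟩ : {F : Set α // M.IsFlat F})
        (Finset.mem_erase.2 ⟨fun hc => hGKeq (congrArg Subtype.val hc), by simp [hGK]⟩)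
        (fun b _ hbne => if_neg (fun hc => hbne (Subtype.ext hc.symm)))]
      exact if_pos rfl
    rw [herase] at key
    exact add_eq_right.1 key


noncomputable def PP (M : Matroid α) (F : Set α) : Polynomial ℤ :=
  ∑ B ∈ (M.E \ F).toFinset.powerset,
    (-1 : Polynomial ℤ) ^ B.card * (Polynomial.X : Polynomial ℤ) ^ (M.rank - M.rankOf (↑B ∪ F))

lemma PP_eq (hF : M.IsFlat F) :
    PP M F = ∑ K ∈ Finset.univ.filter (fun K : {F : Set α // M.IsFlat F} => F ⊆ K.1),
      dd M F K.1 * (Polynomial.X : Polynomial ℤ) ^ (M.rank - M.rankOf K.1) := by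
  classical
  set t := Finset.univ.filter (fun K : {F : Set α // M.IsFlat F} => F ⊆ K.1) with ht
  have hsub : ∀ B ∈ (M.E \ F).toFinset.powerset, (B : Set α) ⊆ M.E \ F :=
    fun B hB x hx => Set.mem_toFinset.1 (Finset.mem_powerset.1 hB hx)
  have hground : ∀ B ∈ (M.E \ F).toFinset.powerset, F ∪ (B : Set α) ⊆ M.E :=
    fun B hB => union_subset hF.subset_ground ((hsub B hB).trans diff_subset)
  have maps : ∀ B ∈ (M.E \ F).toFinset.powerset,
      (⟨M.closure (F ∪ ↑B), M.closure_flat' _⟩ : {F : Set α // M.IsFlat F}) ∈ t := by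
    intro B hB
    refine Finset.mem_filter.2 ⟨Finset.mem_univ _, ?_⟩
    exact subset_union_left.trans (M.subset_closure _ (hground B hB))
  have hfib := Finset.sum_fiberwise_of_maps_to maps
    (fun B => (-1 : Polynomial ℤ) ^ B.card
      * (Polynomial.X : Polynomial ℤ) ^ (M.rank - M.rankOf (↑B ∪ F)))
  rw [PP, ← hfib]
  refine Finset.sum_congr rfl fun K hK => ?_
  have hfiber : (M.E \ F).toFinset.powerset.filter
        (fun B : Finset α => (⟨M.closure (F ∪ ↑B), M.closure_flat' _⟩ :
          {F : Set α // M.IsFlat F}) = K)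
      = (M.E \ F).toFinset.powerset.filter
        (fun B : Finset α => M.closure (F ∪ ↑B) = K.1) := by
    ext B
    simp only [Finset.mem_filter, Subtype.ext_iff]
  rw [hfiber, dd, Finset.sum_mul]
  refine Finset.sum_congr rfl fun B hB => ?_
  obtain ⟨hB1, hB2⟩ := Finset.mem_filter.1 hB
  have : M.rankOf (↑B ∪ F) = M.rankOf K.1 := by
    rw [union_comm, ← hB2, rankOf_closure]
  rw [this]

lemma KEY' (hG : M.IsFlat G) :
    (∑ F ∈ Finset.univ.filter (fun F : {F : Set α // M.IsFlat F} => G ⊆ F.1), PP M F.1)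
      = (Polynomial.X : Polynomial ℤ) ^ (M.rank - M.rankOf G) := by
  classical
  have hstep : ∀ F ∈ Finset.univ.filter (fun F : {F : Set α // M.IsFlat F} => G ⊆ F.1),
      PP M F.1 = ∑ K ∈ Finset.univ.filter
        (fun K : {F : Set α // M.IsFlat F} => F.1 ⊆ K.1),
        dd M F.1 K.1 * (Polynomial.X : Polynomial ℤ) ^ (M.rank - M.rankOf K.1) :=
    fun F _ => PP_eq F.2
  rw [Finset.sum_congr rfl hstep]
  rw [Finset.sum_comm' (t' := Finset.univ.filter
        (fun K : {F : Set α // M.IsFlat F} => G ⊆ K.1))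
      (s' := fun K => Finset.univ.filter
        (fun F : {F : Set α // M.IsFlat F} => G ⊆ F.1 ∧ F.1 ⊆ K.1))]
  · have hinner : ∀ K ∈ Finset.univ.filter
        (fun K : {F : Set α // M.IsFlat F} => G ⊆ K.1),
        (∑ F ∈ Finset.univ.filter
          (fun F : {F : Set α // M.IsFlat F} => G ⊆ F.1 ∧ F.1 ⊆ K.1),
          dd M F.1 K.1 * (Polynomial.X : Polynomial ℤ) ^ (M.rank - M.rankOf K.1))
        = (if G = K.1 then 1 else 0)
            * (Polynomial.X : Polynomial ℤ) ^ (M.rank - M.rankOf K.1) := by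
      intro K hK
      obtain ⟨-, h1⟩ := Finset.mem_filter.1 hK
      rw [← Finset.sum_mul, claimB hG _ K.1 K.2 h1 rfl]
    rw [Finset.sum_congr rfl hinner]
    rw [Finset.sum_eq_single_of_mem (⟨G, hG⟩ : {F : Set α // M.IsFlat F})
      (by simp) (fun b _ hbne => by
        rw [if_neg (fun hc => hbne (Subtype.ext hc.symm)), zero_mul])]
    rw [if_pos rfl, one_mul]
  · intro F K
    simp only [Finset.mem_filter, Finset.mem_univ, true_and]
    exact ⟨fun h => ⟨⟨h.1, h.2⟩, h.1.trans h.2⟩, fun h => ⟨h.1.1, h.1.2⟩⟩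


lemma KEY {A : Finset α} (hA : (A : Set α) ⊆ M.E) :
    (∑ F ∈ Finset.univ.filter (fun F : {F : Set α // M.IsFlat F} => (A : Set α) ⊆ F.1), PP M F.1)
      = (Polynomial.X : Polynomial ℤ) ^ (M.rank - M.rankOf ↑A) := by
  have hfilter : Finset.univ.filter (fun F : {F : Set α // M.IsFlat F} => (A : Set α) ⊆ F.1)
      = Finset.univ.filter (fun F : {F : Set α // M.IsFlat F} => M.closure ↑A ⊆ F.1) := by
    ext F
    simp only [Finset.mem_filter, Finset.mem_univ, true_and]
    constructor
    · intro hsub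
      have := M.closure_subset_closure hsub
      rwa [F.2.closure] at this
    · intro hsub
      exact (M.subset_closure _ hA).trans hsub
  rw [hfilter, KEY' (M.closure_flat' ↑A), rankOf_closure]

lemma rank_pos_ground_nonempty (h : 0 < M.rank) : M.E.toFinset.Nonempty := by
  rw [Finset.nonempty_iff_ne_empty]
  intro hc
  have hE : M.E = ∅ := by rwa [Set.toFinset_eq_empty] at hc
  obtain ⟨I, hI⟩ := M.exists_isBasis' M.E
  have : I = ∅ := by
    have := hI.subset
    rw [hE] at this
    exact subset_empty_iff.1 this
  have : M.rank = 0 := by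
    rw [Matroid.rank, rankOf_eq_of_basis' hI, this, Set.ncard_empty]
  omega


end Matroid

end Aux

/-- for any matroid `M` of positive rank,
`∑_{F ∈ L} t^{rk F} χ_{M_F}(t⁻¹) χ_{M^F}(t) = 0`.  Here `M_F = M ↾ F` is the
localization, `M^F = M.con F` the restriction of the paper, and
`t^{rk F} χ_{M_F}(t⁻¹)` is the reflection of `χ_{M_F}` at degree `rk F`. -/
theorem sum_reflect_charPoly_mul_charPoly_con {α : Type} [Fintype α] (M : Matroid α)
    (h : 0 < M.rank) :
    ∑ F : {F : Set α // M.IsFlat F},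
      ((M ↾ F.1).charPoly).reflect (M.rankOf F.1) * (M.con F.1).charPoly = 0 := by
  classical
  have hstep : ∀ F : {F : Set α // M.IsFlat F},
      ((M ↾ F.1).charPoly).reflect (M.rankOf F.1) * (M.con F.1).charPoly
      = ∑ A ∈ F.1.toFinset.powerset,
          (-1 : Polynomial ℤ) ^ A.card * (Polynomial.X : Polynomial ℤ) ^ (M.rankOf ↑A)
            * PP M F.1 := by
    intro F
    rw [reflect_charPoly_restrict F.2.subset_ground, charPoly_con F.2.subset_ground,
      Finset.sum_mul]
    rfl
  rw [Finset.sum_congr rfl (fun F _ => hstep F)]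
  rw [Finset.sum_comm' (t' := M.E.toFinset.powerset)
      (s' := fun A => Finset.univ.filter
        (fun F : {F : Set α // M.IsFlat F} => (A : Set α) ⊆ F.1))]
  · have hinner : ∀ A ∈ M.E.toFinset.powerset,
        (∑ F ∈ Finset.univ.filter
          (fun F : {F : Set α // M.IsFlat F} => (A : Set α) ⊆ F.1),
          (-1 : Polynomial ℤ) ^ A.card * (Polynomial.X : Polynomial ℤ) ^ (M.rankOf ↑A)
            * PP M F.1)
        = (-1 : Polynomial ℤ) ^ A.card * (Polynomial.X : Polynomial ℤ) ^ M.rank := by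
      intro A hA
      have hAE : (A : Set α) ⊆ M.E :=
        fun x hx => Set.mem_toFinset.1 (Finset.mem_powerset.1 hA hx)
      rw [← Finset.mul_sum, KEY hAE, mul_assoc, ← pow_add]
      congr 2
      have := rankOf_le_rank M (A : Set α)
      omega
    rw [Finset.sum_congr rfl hinner, ← Finset.sum_mul, neg_one_sum,
      Finset.sum_powerset_neg_one_pow_card_of_nonempty (rank_pos_ground_nonempty h),
      map_zero, zero_mul]
  · intro F A
    simp only [Finset.mem_univ, true_and, Finset.mem_powerset, Finset.mem_filter]
    constructor
    · intro hsub
      have h1 : (A : Set α) ⊆ F.1 := fun x hx => Set.mem_toFinset.1 (hsub hx)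
      exact ⟨h1, fun x hx => Set.mem_toFinset.2 (F.2.subset_ground (h1 hx))⟩
    · rintro ⟨h1, -⟩ x hx
      exact Set.mem_toFinset.2 (h1 hx)
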